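/- arXiv:1311.6044 — 3 statements merged into one kernel-verified Lean document; each statement's English description precedes it below -/
import Mathlib

section
/- Let Ω ⊂ ℝ^N be open with 0 ∈ ∂Ω, and suppose there are η₀ > 0 and a C² function φ : {z' ∈ ℝ^{N−1} : |z'| < η₀} → ℝ with φ(0) = 0 and ∇φ(0) = 0 such that, for z = (z₁, z') with |z₁| < η₀ and |z'| < η₀, z ∈ Ω if and only if φ(z') < z₁ < η₀, and the points (φ(z'), z') lie on ∂Ω. Then there exist η > 0 and C > 0 such that d(z) ≥ (z₁ − φ(z'))(1 − C|z'|²) for all z = (z₁, z') ∈ Ω with |z₁| < η and |z'| < η, where d(z) = dist(z, ∂Ω). -/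
open MeasureTheory Filter Topology Set
open scoped Classical

noncomputable section

abbrev EucSp (N : ℕ) : Type := EuclideanSpace ℝ (Fin N)

/-- The second-difference kernel of the fractional Laplacian:
`δ(u,x,y)/|y|^{N+2α}` with `δ(u,x,y) = u(x+y) + u(x-y) - 2u(x)`. -/
def fracKernel (N : ℕ) (α : ℝ) (u : EucSp N → ℝ) (x y : EucSp N) : ℝ :=
  (u (x + y) + u (x - y) - 2 * u x) / ‖y‖ ^ ((N : ℝ) + 2 * α)

/-- `(-Δ)^α u` is well defined at `x` (the defining integral converges). -/
def FracLapDefinedAt (N : ℕ) (α : ℝ) (u : EucSp N → ℝ) (x : EucSp N) : Prop :=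
  Integrable (fracKernel N α u x)

/-- The fractional Laplacian `(-Δ)^α u (x) = -(1/2) ∫ δ(u,x,y)/|y|^{N+2α} dy`. -/
def fracLap (N : ℕ) (α : ℝ) (u : EucSp N → ℝ) (x : EucSp N) : ℝ :=
  -(1 / 2) * ∫ y, fracKernel N α u x y

/-- Membership in the weighted space `L¹_ω(ℝ^N)`, `ω(y) = (1+|y|^{N+2α})⁻¹`. -/
def MemL1w (N : ℕ) (α : ℝ) (u : EucSp N → ℝ) : Prop :=
  Integrable (fun y => u y / (1 + ‖y‖ ^ ((N : ℝ) + 2 * α)))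

/-- Distance to the boundary, `d(x) = dist(x, ∂Ω)`. -/
def dΩ {N : ℕ} (Ω : Set (EucSp N)) (x : EucSp N) : ℝ :=
  Metric.infDist x (frontier Ω)

/-- The filter of points `x ∈ Ω` with `x → ∂Ω`. -/
def bdryFilter {N : ℕ} (Ω : Set (EucSp N)) : Filter (EucSp N) :=
  nhdsSet (frontier Ω) ⊓ Filter.principal Ω

/-- `Ω` has `C²` boundary: near each boundary point, `Ω` is the sublevel set of a
`C²` function with nonvanishing gradient. -/
def HasC2Boundary {N : ℕ} (Ω : Set (EucSp N)) : Prop :=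
  ∀ x ∈ frontier Ω, ∃ (U : Set (EucSp N)) (φ : EucSp N → ℝ),
    IsOpen U ∧ x ∈ U ∧ ContDiffOn ℝ 2 φ U ∧
    (∀ y ∈ U, y ∈ Ω ↔ φ y < 0) ∧ ∀ y ∈ U, fderiv ℝ φ y ≠ 0

/-- Hypothesis (H1): `f` is locally Hölder continuous in `Ω` of some exponent `β > 0`. -/
def LocallyHolder {N : ℕ} (Ω : Set (EucSp N)) (f : EucSp N → ℝ) : Prop :=
  ∃ β : NNReal, 0 < β ∧ ∀ K ⊆ Ω, IsCompact K → ∃ C : NNReal, HolderOnWith C β f K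

/-- The one-dimensional constant
`C(τ) = ∫_0^∞ (χ_{(0,1)}(t)|1-t|^τ + (1+t)^τ - 2) t^{-1-2α} dt`. -/
def Cint (α τ : ℝ) : ℝ :=
  ∫ t in Ioi (0 : ℝ),
    ((Ioo (0 : ℝ) 1).indicator (fun s => |1 - s| ^ τ) t + (1 + t) ^ τ - 2) / t ^ (1 + 2 * α)

/-- `τ₀` is the unique zero of `C(⬝)` in `(-1,0)`. -/
def IsTau0 (α τ₀ : ℝ) : Prop :=
  τ₀ ∈ Ioo (-1 : ℝ) 0 ∧ Cint α τ₀ = 0 ∧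
    ∀ τ ∈ Ioo (-1 : ℝ) 0, Cint α τ = 0 → τ = τ₀

/-- Classical solution of the large-solution problem
`(-Δ)^α u + |u|^{p-1}u = f` in `Ω`, `u = 0` in `Ω^c`, `u(x) → +∞` as `x → ∂Ω`. -/
def IsLargeSolution (N : ℕ) (α p : ℝ) (Ω : Set (EucSp N)) (f u : EucSp N → ℝ) : Prop :=
  MemL1w N α u ∧ ContinuousOn u Ω ∧ (∀ x ∈ (closure Ω)ᶜ, u x = 0) ∧
    (∀ x ∈ Ω, FracLapDefinedAt N α u x ∧
      fracLap N α u x + |u x| ^ (p - 1) * u x = f x) ∧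
    Tendsto u (bdryFilter Ω) atTop

/-- `0 < liminf g(x) d(x)^{-τ} ≤ limsup g(x) d(x)^{-τ} < +∞` as `x ∈ Ω`, `x → ∂Ω`. -/
def Asymp {N : ℕ} (Ω : Set (EucSp N)) (g : EucSp N → ℝ) (τ : ℝ) : Prop :=
  0 < liminf (fun x => ((g x * dΩ Ω x ^ (-τ) : ℝ) : EReal)) (bdryFilter Ω) ∧
    liminf (fun x => ((g x * dΩ Ω x ^ (-τ) : ℝ) : EReal)) (bdryFilter Ω) ≤
      limsup (fun x => ((g x * dΩ Ω x ^ (-τ) : ℝ) : EReal)) (bdryFilter Ω) ∧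
    limsup (fun x => ((g x * dΩ Ω x ^ (-τ) : ℝ) : EReal)) (bdryFilter Ω) < ⊤

/-- Hypothesis (H2). -/
def HypH2 {N : ℕ} (Ω : Set (EucSp N)) (f : EucSp N → ℝ) (α p : ℝ) : Prop :=
  limsup (fun x => ((max (f x) 0 * dΩ Ω x ^ (2 * α * p / (p - 1)) : ℝ) : EReal))
      (bdryFilter Ω) < ⊤ ∧
    Tendsto (fun x => max (-f x) 0 * dΩ Ω x ^ (2 * α * p / (p - 1))) (bdryFilter Ω) (𝓝 0)

/-- Hypothesis (H2*). -/
def HypH2star {N : ℕ} (Ω : Set (EucSp N)) (f : EucSp N → ℝ) (α : ℝ) : Prop :=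
  limsup (fun x => ((|f x| * dΩ Ω x ^ (2 * α) : ℝ) : EReal)) (bdryFilter Ω) < ⊤

/-- Classical sub-solution of `(-Δ)^α u + |u|^{p-1}u = f` in `Ω`. -/
def IsSubSol (N : ℕ) (α p : ℝ) (Ω : Set (EucSp N)) (f U : EucSp N → ℝ) : Prop :=
  ContinuousOn U Ω ∧ MemL1w N α U ∧
    ∀ x ∈ Ω, FracLapDefinedAt N α U x ∧
      fracLap N α U x + |U x| ^ (p - 1) * U x ≤ f x

/-- Classical super-solution of `(-Δ)^α u + |u|^{p-1}u = f` in `Ω`. -/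
def IsSuperSol (N : ℕ) (α p : ℝ) (Ω : Set (EucSp N)) (f U : EucSp N → ℝ) : Prop :=
  ContinuousOn U Ω ∧ MemL1w N α U ∧
    ∀ x ∈ Ω, FracLapDefinedAt N α U x ∧
      f x ≤ fracLap N α U x + |U x| ^ (p - 1) * U x

/-- Viscosity super-solution of `(-Δ)^α u + h(u) ≥ f` in `O`. -/
def ViscSuper (N : ℕ) (α : ℝ) (h : ℝ → ℝ) (f : EucSp N → ℝ) (O : Set (EucSp N))
    (u : EucSp N → ℝ) : Prop :=
  ∀ x₀ ∈ O, ∀ V : Set (EucSp N), IsOpen V → x₀ ∈ V → closure V ⊆ O →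
    ∀ φ : EucSp N → ℝ, ContDiffOn ℝ 2 φ (closure V) → φ x₀ = u x₀ →
      (∀ x ∈ V, φ x ≤ u x) →
      f x₀ ≤ fracLap N α (fun y => if y ∈ V then φ y else u y) x₀ + h (u x₀)

/-- Viscosity sub-solution of `(-Δ)^α u + h(u) ≤ f` in `O`. -/
def ViscSub (N : ℕ) (α : ℝ) (h : ℝ → ℝ) (f : EucSp N → ℝ) (O : Set (EucSp N))
    (u : EucSp N → ℝ) : Prop :=
  ∀ x₀ ∈ O, ∀ V : Set (EucSp N), IsOpen V → x₀ ∈ V → closure V ⊆ O →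
    ∀ φ : EucSp N → ℝ, ContDiffOn ℝ 2 φ (closure V) → φ x₀ = u x₀ →
      (∀ x ∈ V, u x ≤ φ x) →
      fracLap N α (fun y => if y ∈ V then φ y else u y) x₀ + h (u x₀) ≤ f x₀

/-- Prepending a first coordinate: `(z₁, z') ∈ ℝ × ℝ^n = ℝ^{n+1}`. -/
def consE {n : ℕ} (a : ℝ) (b : EucSp n) : EucSp (n + 1) :=
  (EuclideanSpace.equiv (Fin (n + 1)) ℝ).symm (Fin.cons a (fun i => b i))

end
lemma consE_eq_self {n : ℕ} (w : EucSp (n+1)) : consE (w 0) (WithLp.toLp 2 (fun i : Fin n => w i.succ)) = w := by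
  ext i; exact Fin.cases rfl (fun j => rfl) i

lemma consE_sub {n : ℕ} (a c : ℝ) (b d : EucSp n) :
    consE a b - consE c d = consE (a-c) (b-d) := by
  ext i; exact Fin.cases rfl (fun j => rfl) i

lemma norm_consE_sq {n : ℕ} (a : ℝ) (b : EucSp n) : ‖consE a b‖^2 = a^2 + ‖b‖^2 := by
  rw [EuclideanSpace.norm_eq, EuclideanSpace.norm_eq, Real.sq_sqrt (by positivity),
    Real.sq_sqrt (by positivity), Fin.sum_univ_succ]
  simp [consE]

lemma quad_bound_aux (M zn η : ℝ) (hzn0 : 0 ≤ zn) (hznη : zn ≤ η) (hηpos : 0 < η)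
    (hMη : M * η ≤ 1/100) (hMpos : 0 < M) : M * zn * zn ≤ η := by
  nlinarith [mul_nonneg (mul_nonneg hMpos.le hzn0) (sub_nonneg.2 hznη),
    mul_nonneg (mul_nonneg hMpos.le hηpos.le) (sub_nonneg.2 hznη),
    mul_le_mul_of_nonneg_right hMη hηpos.le]

lemma factor_le_aux (D M zn : ℝ) (hDpos : 0 < D) : D * (1 - M^2 * zn^2) ≤ D := by
  nlinarith [sq_nonneg (M*zn)]

lemma fourMR_aux (M R η : ℝ) (hM1 : 1 ≤ M) (hRle : R ≤ 2*η) (hMη : M*η ≤ 1/100)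
    (hRpos : 0 < R) (hηpos : 0 < η) : 4*M*R ≤ 1 := by
  nlinarith

lemma sq_lt_aux (nw R a : ℝ) (h0 : 0 ≤ nw) (hlt : nw < R) (heq : nw^2 = a) : a < R^2 := by
  nlinarith

lemma key_ineq_aux (M D R zn s : ℝ) (hzn0 : 0 ≤ zn) (hs0 : 0 ≤ s)
    (hDpos : 0 < D) (hRpos : 0 < R) (hRD : R ≤ D) (hR4M : 4*M*R ≤ 1)
    (hRexp : R = D - M^2*D*zn^2) :
    2*R^2 - s^2 ≤ (D - M*(zn+s)*s) * (2*R) := by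
  have hc : 0 ≤ M^2 * zn^2 * R :=
    mul_nonneg (mul_nonneg (sq_nonneg M) (sq_nonneg zn)) hRpos.le
  have h1 : 4*(M*R*zn)*s ≤ s^2 + 4*(M*R*zn)^2 := by nlinarith [sq_nonneg (s - 2*(M*R*zn))]
  have h1b : (M*R*zn)^2 ≤ M^2*R*D*zn^2 := by
    nlinarith [mul_le_mul_of_nonneg_left hRD hc]
  have h2 : 4*M*R*s^2 ≤ s^2 := by nlinarith [sq_nonneg s]
  have h3 : R^2 = R*D - M^2*R*D*zn^2 := by rw [hRexp]; ring
  nlinarith [h1, h1b, h2, h3]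

lemma step_aux (Q R s tt : ℝ) (hRpos : 0 < R) (hs0 : 0 ≤ s) (hts : tt^2 + s^2 < R^2)
    (hkey : 2*R^2 - s^2 ≤ Q*(2*R)) : tt < Q ∧ |tt| < R ∧ s < R := by
  have hsR : s < R := by nlinarith [sq_nonneg tt]
  have hQpos : 0 < Q := by nlinarith
  have h6 : 0 ≤ 2*R^2 - s^2 := by nlinarith
  have h4 : 4*R^2*(R^2 - s^2) ≤ (2*R^2-s^2)^2 := by nlinarith [sq_nonneg (s*s)]
  have h5 := mul_self_le_mul_self h6 hkey
  have h7 : tt^2 < Q^2 := by nlinarith [mul_pos hRpos hRpos]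
  have h8 : tt < Q := by nlinarith
  have h9 : |tt| < R := by nlinarith [sq_abs tt, abs_nonneg tt]
  exact ⟨h8, h9, hsR⟩

/-- Lemma 3.3 (geometric distance estimate): near a boundary point written as a
`C²` graph `z₁ = φ(z')`, one has `d(z) ≥ (z₁ - φ(z'))(1 - C|z'|²)`. -/
theorem distance_graph_lower_bound
    (n : ℕ) (hn : 1 ≤ n)
    (Ω : Set (EucSp (n + 1))) (hΩopen : IsOpen Ω)
    (η₀ : ℝ) (hη₀ : 0 < η₀) (φ : EucSp n → ℝ)
    (hφ0 : φ 0 = 0) (hφ'0 : fderiv ℝ φ 0 = 0)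
    (hφC2 : ContDiffOn ℝ 2 φ (Metric.ball 0 η₀))
    (hgraph : ∀ (z₁ : ℝ) (z' : EucSp n), |z₁| < η₀ → ‖z'‖ < η₀ →
      (consE z₁ z' ∈ Ω ↔ φ z' < z₁))
    (hbdry : ∀ z' : EucSp n, ‖z'‖ < η₀ → consE (φ z') z' ∈ frontier Ω) :
    ∃ η > 0, ∃ C > 0, ∀ (z₁ : ℝ) (z' : EucSp n), |z₁| < η → ‖z'‖ < η →
      consE z₁ z' ∈ Ω →
      (z₁ - φ z') * (1 - C * ‖z'‖ ^ 2) ≤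
        Metric.infDist (consE z₁ z') (frontier Ω) := by
  -- differentiability of φ on the ball
  have hdiff : ∀ y ∈ Metric.ball (0 : EucSp n) η₀, DifferentiableAt ℝ φ y := by
    intro y hy
    exact (hφC2.contDiffAt ((Metric.isOpen_ball).mem_nhds hy)).differentiableAt (by norm_num)
  have h0mem : (0 : EucSp n) ∈ Metric.ball (0 : EucSp n) η₀ := Metric.mem_ball_self hη₀
  have hC2at : ContDiffAt ℝ 2 φ 0 := hφC2.contDiffAt ((Metric.isOpen_ball).mem_nhds h0mem)
  have hC1fd : ContDiffAt ℝ 1 (fderiv ℝ φ) 0 := hC2at.fderiv_right (by norm_num)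
  obtain ⟨K, t, ht, hlip⟩ := hC1fd.exists_lipschitzOnWith
  obtain ⟨η₁, hη₁pos, hη₁sub⟩ := Metric.mem_nhds_iff.1 ht
  set M : ℝ := max (K : ℝ) 1 with hM
  have hM1 : (1:ℝ) ≤ M := le_max_right _ _
  have hKM : (K:ℝ) ≤ M := le_max_left _ _
  have hMpos : 0 < M := lt_of_lt_of_le one_pos hM1
  set η₂ : ℝ := min η₁ η₀ with hη₂
  have hη₂pos : 0 < η₂ := lt_min hη₁pos hη₀
  have hη₂η₀ : η₂ ≤ η₀ := min_le_right _ _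
  have hη₂η₁ : η₂ ≤ η₁ := min_le_left _ _
  clear_value M η₂
  -- gradient bound
  have hgrad : ∀ y : EucSp n, ‖y‖ < η₂ → ‖fderiv ℝ φ y‖ ≤ M * ‖y‖ := by
    intro y hy
    have hyt : y ∈ t := hη₁sub (by simpa [Metric.mem_ball] using lt_of_lt_of_le hy hη₂η₁)
    have h0t : (0 : EucSp n) ∈ t := mem_of_mem_nhds ht
    have hd := hlip.dist_le_mul y hyt 0 h0t
    simp only [dist_eq_norm, hφ'0, sub_zero] at hd
    calc ‖fderiv ℝ φ y‖ ≤ (K:ℝ) * ‖y‖ := hd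
      _ ≤ M * ‖y‖ := mul_le_mul_of_nonneg_right hKM (norm_nonneg _)
  -- local Lipschitz estimate for φ
  have hφlip : ∀ (a b : EucSp n) (ρ : ℝ), ‖a‖ ≤ ρ → ‖b‖ ≤ ρ → ρ < η₂ →
      |φ b - φ a| ≤ M * ρ * ‖b - a‖ := by
    intro a b ρ ha hb hρ
    have hρ0 : 0 ≤ ρ := le_trans (norm_nonneg _) ha
    have hsub : Metric.closedBall (0 : EucSp n) ρ ⊆ Metric.ball 0 η₀ := by
      intro x hx
      simp only [Metric.mem_closedBall, Metric.mem_ball, dist_zero_right] at hx ⊢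
      exact lt_of_le_of_lt hx (lt_of_lt_of_le hρ hη₂η₀)
    have h := Convex.norm_image_sub_le_of_norm_fderiv_le
      (f := φ) (C := M * ρ) (s := Metric.closedBall (0 : EucSp n) ρ)
      (fun x hx => hdiff x (hsub hx))
      (fun x hx => by
        simp only [Metric.mem_closedBall, dist_zero_right] at hx
        calc ‖fderiv ℝ φ x‖ ≤ M * ‖x‖ := hgrad x (lt_of_le_of_lt hx hρ)
          _ ≤ M * ρ := mul_le_mul_of_nonneg_left hx (le_of_lt hMpos))
      (convex_closedBall _ _)
      (by simpa [Metric.mem_closedBall, dist_zero_right] using ha)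
      (by simpa [Metric.mem_closedBall, dist_zero_right] using hb)
    simpa [Real.norm_eq_abs] using h
  -- choose the constants
  refine ⟨min η₂ (1/M) / 100, by positivity, M^2, by positivity, ?_⟩
  set η : ℝ := min η₂ (1/M) / 100 with hηdef
  have hηη₂ : 100 * η ≤ η₂ := by
    have h := min_le_left η₂ (1/M)
    rw [hηdef]; linarith
  have hηM : 100 * η ≤ 1/M := by
    have h := min_le_right η₂ (1/M)
    rw [hηdef]; linarith
  have hηpos : 0 < η := by rw [hηdef]; positivity
  clear_value η
  have hMη : M * η ≤ 1/100 := by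
    have h3 : M * (100 * η) ≤ M * (1/M) := mul_le_mul_of_nonneg_left hηM hMpos.le
    rw [mul_one_div, div_self hMpos.ne'] at h3
    linarith
  intro z₁ z' hz₁ hz' hzΩ
  have hz'η₂ : ‖z'‖ < η₂ := lt_of_lt_of_le hz' (by linarith)
  have hz'η₀ : ‖z'‖ < η₀ := lt_of_lt_of_le hz'η₂ hη₂η₀
  have hz₁η₀ : |z₁| < η₀ := lt_of_lt_of_le hz₁ (le_trans (by linarith) hη₂η₀)
  have hφz₁ : φ z' < z₁ := (hgraph z₁ z' hz₁η₀ hz'η₀).1 hzΩ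
  set D : ℝ := z₁ - φ z' with hD
  set zn : ℝ := ‖z'‖ with hzn
  set R : ℝ := D * (1 - M^2 * zn^2) with hR
  clear_value D zn R
  have hDpos : 0 < D := by rw [hD]; linarith
  have hzn0 : 0 ≤ zn := by rw [hzn]; exact norm_nonneg _
  have hznη : zn < η := hz'
  -- bound on |φ z'|
  have hφz' : |φ z'| ≤ M * zn * zn := by
    have h := hφlip 0 z' zn (by simpa [hzn] using norm_nonneg z') (le_of_eq hzn.symm)
      (hzn ▸ hz'η₂)
    simpa [hφ0, ← hzn] using h
  have hDle : D ≤ 2 * η := by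
    have h1 : z₁ < η := lt_of_abs_lt hz₁
    have h2 : -φ z' ≤ M * zn * zn := by
      have h := abs_le.1 hφz'; linarith [h.1]
    have h3 : M * zn * zn ≤ η := quad_bound_aux M zn η hzn0 hznη.le hηpos hMη hMpos
    rw [hD]; linarith
  -- trivial case: R ≤ 0
  rcases le_or_gt R 0 with hR0 | hRpos
  · exact le_trans hR0 Metric.infDist_nonneg
  have hRD : R ≤ D := by rw [hR]; exact factor_le_aux D M zn hDpos
  have hR4M : 4 * M * R ≤ 1 :=
    fourMR_aux M R η hM1 (le_trans hRD hDle) hMη hRpos hηpos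
  -- ball containment
  have hball : Metric.ball (consE z₁ z') R ⊆ Ω := by
    intro w hw
    rw [Metric.mem_ball, dist_comm, dist_eq_norm] at hw
    set w₁ : ℝ := w 0 with hw₁
    set w' : EucSp n := WithLp.toLp 2 (fun i : Fin n => w i.succ) with hw'
    have hwcons : w = consE w₁ w' := (consE_eq_self w).symm
    clear_value w₁ w'
    set s : ℝ := ‖w' - z'‖ with hs
    set tt : ℝ := z₁ - w₁ with htt
    clear_value s tt
    have hs0 : 0 ≤ s := by rw [hs]; exact norm_nonneg _
    have hnn : 0 ≤ ‖consE z₁ z' - w‖ := norm_nonneg _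
    have hnorm : ‖consE z₁ z' - w‖^2 = tt^2 + s^2 := by
      rw [hwcons, consE_sub, norm_consE_sq, norm_sub_rev z' w', ← hs, htt]
    have hts : tt^2 + s^2 < R^2 := sq_lt_aux _ R _ hnn hw hnorm
    have hRexp : R = D - M^2*D*zn^2 := by rw [hR]; ring
    have hkey := key_ineq_aux M D R zn s hzn0 hs0 hDpos hRpos hRD hR4M hRexp
    obtain ⟨hQt, habs, hsR⟩ := step_aux (D - M*(zn+s)*s) R s tt hRpos hs0 hts hkey
    -- bounds needed for hgraph
    have hw'le : ‖w'‖ ≤ zn + s := by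
      have h10 : w' = z' + (w' - z') := by abel
      calc ‖w'‖ = ‖z' + (w' - z')‖ := by rw [← h10]
        _ ≤ ‖z'‖ + ‖w' - z'‖ := norm_add_le _ _
        _ = zn + s := by rw [hzn, hs]
    have hznsle : zn + s < 3*η := by linarith
    have hznsη₂ : zn + s < η₂ := lt_of_lt_of_le hznsle (by linarith)
    have hw'norm : ‖w'‖ < η₀ := lt_of_le_of_lt hw'le (lt_of_lt_of_le hznsη₂ hη₂η₀)
    have hw₁norm : |w₁| < η₀ := by
      have h11 := abs_lt.1 hz₁
      have h12 := abs_lt.1 habs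
      rw [htt] at h12
      have h13 : R ≤ 2*η := le_trans hRD hDle
      have h14 : 100*η ≤ η₀ := le_trans hηη₂ hη₂η₀
      rw [abs_lt]
      constructor
      · linarith [h11.1, h12.2]
      · linarith [h11.2, h12.1]
    -- φ estimate and conclusion
    have hφw : φ w' ≤ φ z' + M * (zn + s) * s := by
      have ha : ‖z'‖ ≤ zn + s := by rw [← hzn]; linarith
      have h15 := hφlip z' w' (zn + s) ha hw'le hznsη₂
      rw [← hs] at h15
      have h16 := (abs_le.1 h15).2
      linarith
    have hφltw : φ w' < w₁ := by
      have h17 : z₁ = D + φ z' := by rw [hD]; ring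
      have h18 : w₁ = z₁ - tt := by rw [htt]; ring
      linarith [hQt, hφw]
    rw [hwcons]
    exact (hgraph w₁ w' hw₁norm hw'norm).2 hφltw
  -- conclude via infDist
  have hne : (frontier Ω).Nonempty := ⟨_, hbdry 0 (by simpa using hη₀)⟩
  by_contra hcon
  push_neg at hcon
  obtain ⟨y, hy, hdy⟩ := (Metric.infDist_lt_iff hne).1 hcon
  have hyΩ : y ∈ Ω := hball (by rwa [Metric.mem_ball, dist_comm])
  have hyni : y ∉ Ω := by
    have h18 := hy
    rw [hΩopen.frontier_eq] at h18
    exact h18.2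
  exact hyni hyΩ
end

section
/- Let α ∈ (0,1), let O ⊂ ℝ^N be an open, bounded set, let f : O → ℝ be continuous and let h : ℝ → ℝ be increasing. Let u, v : ℝ^N → ℝ be continuous on the closure of O, with (−Δ)^α u(x) and (−Δ)^α v(x) well defined for all x ∈ O, satisfying (−Δ)^α u(x) + h(u(x)) ≥ f(x) and (−Δ)^α v(x) + h(v(x)) ≤ f(x) for all x ∈ O, and v(x) ≤ u(x) for all x ∈ O^c. Then u(x) ≥ v(x) for all x ∈ O. -/
open MeasureTheory Filter Topology Set
open scoped Classical

/-- Theorem 2.4 (Comparison principle). -/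
theorem comparison_principle
    (N : ℕ) (hN : 1 ≤ N) (α : ℝ) (hα : α ∈ Ioo (0 : ℝ) 1)
    (O : Set (EucSp N)) (hOopen : IsOpen O) (hObdd : Bornology.IsBounded O)
    (f : EucSp N → ℝ) (hf : ContinuousOn f O)
    (h : ℝ → ℝ) (hmono : Monotone h)
    (u v : EucSp N → ℝ)
    (hu : ContinuousOn u (closure O)) (hv : ContinuousOn v (closure O))
    (hsuper : ∀ x ∈ O, FracLapDefinedAt N α u x ∧ f x ≤ fracLap N α u x + h (u x))
    (hsub : ∀ x ∈ O, FracLapDefinedAt N α v x ∧ fracLap N α v x + h (v x) ≤ f x)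
    (hout : ∀ x ∈ Oᶜ, v x ≤ u x) :
    ∀ x ∈ O, v x ≤ u x := by
  by_contra hcon
  push_neg at hcon
  obtain ⟨x₁, hx₁O, hx₁⟩ := hcon
  set g : EucSp N → ℝ := fun z => v z - u z with hgdef
  have hgc : ContinuousOn g (closure O) := hv.sub hu
  have hcK : IsCompact (closure O) :=
    Metric.isCompact_of_isClosed_isBounded isClosed_closure hObdd.closure
  have hne : (closure O).Nonempty := ⟨x₁, subset_closure hx₁O⟩
  obtain ⟨x₀, hx₀cl, hmax⟩ := hcK.exists_isMaxOn hne hgc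
  have hg0 : 0 < g x₀ := lt_of_lt_of_le (by simp [hgdef]; linarith)
    (hmax (subset_closure hx₁O))
  have houtg : ∀ z, z ∉ O → g z ≤ 0 := fun z hz => sub_nonpos.mpr (hout z hz)
  have hx₀O : x₀ ∈ O := by
    by_contra hx
    exact absurd (houtg x₀ hx) (not_le.mpr hg0)
  have hglob : ∀ z, g z ≤ g x₀ := by
    intro z
    by_cases hz : z ∈ closure O
    · exact hmax hz
    · exact (houtg z (fun hzO => hz (subset_closure hzO))).trans hg0.le
  -- kernel of the difference
  have hiu : Integrable (fracKernel N α u x₀) := (hsuper x₀ hx₀O).1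
  have hiv : Integrable (fracKernel N α v x₀) := (hsub x₀ hx₀O).1
  set k : EucSp N → ℝ := fun y => fracKernel N α v x₀ y - fracKernel N α u x₀ y with hkdef
  have hik : Integrable k := hiv.sub hiu
  have hkeq : ∀ y, k y = (g (x₀ + y) + g (x₀ - y) - 2 * g x₀) / ‖y‖ ^ ((N : ℝ) + 2 * α) := by
    intro y
    simp only [hkdef, fracKernel, hgdef]
    rw [div_sub_div_same]
    congr 1
    ring
  have hknonpos : ∀ y, k y ≤ 0 := by
    intro y
    rw [hkeq y]
    apply div_nonpos_of_nonpos_of_nonneg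
    · nlinarith [hglob (x₀ + y), hglob (x₀ - y)]
    · positivity
  -- a radius beyond which both x₀ ± y are outside O
  obtain ⟨r, hr⟩ := hObdd.subset_ball x₀
  set R : ℝ := max r 1 with hRdef
  have hR1 : (1 : ℝ) ≤ R := le_max_right r 1
  have hOR : O ⊆ Metric.ball x₀ R := hr.trans (Metric.ball_subset_ball (le_max_left r 1))
  have hexp : (0 : ℝ) < (N : ℝ) + 2 * α := by
    have : (1 : ℝ) ≤ (N : ℝ) := by exact_mod_cast hN
    nlinarith [hα.1]
  have hfar : ∀ y : EucSp N, R ≤ ‖y‖ →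
      k y ≤ -(2 * g x₀) / ‖y‖ ^ ((N : ℝ) + 2 * α) := by
    intro y hy
    have hyp : (0 : ℝ) < ‖y‖ := lt_of_lt_of_le (by linarith) hy
    have h1 : x₀ + y ∉ O := by
      intro hmem
      have := hOR hmem
      rw [Metric.mem_ball, dist_eq_norm, add_sub_cancel_left] at this
      linarith
    have h2 : x₀ - y ∉ O := by
      intro hmem
      have := hOR hmem
      rw [Metric.mem_ball, dist_eq_norm, sub_sub_cancel_left, norm_neg] at this
      linarith
    rw [hkeq y]
    have hd : (0:ℝ) ≤ ‖y‖ ^ ((N:ℝ) + 2 * α) := (Real.rpow_pos_of_pos hyp _).le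
    exact div_le_div_of_nonneg_right (by nlinarith [houtg _ h1, houtg _ h2]) hd
  -- an annulus-contained ball on which k is uniformly negative
  have hNpos : 0 < N := hN
  set e : EucSp N := EuclideanSpace.single (⟨0, hNpos⟩ : Fin N) (1 : ℝ) with hedef
  have hie : ‖e‖ = 1 := by simp [hedef, EuclideanSpace.norm_single]
  set y₀ : EucSp N := (R + 1/2) • e with hy₀def
  have hy₀norm : ‖y₀‖ = R + 1/2 := by
    rw [hy₀def, norm_smul, hie, mul_one, Real.norm_eq_abs, abs_of_pos (by linarith)]
  set A : Set (EucSp N) := Metric.ball y₀ (1/2) with hAdef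
  have hAnorm : ∀ y ∈ A, R ≤ ‖y‖ ∧ ‖y‖ ≤ R + 1 := by
    intro y hy
    rw [hAdef, Metric.mem_ball, dist_eq_norm] at hy
    constructor
    · have := norm_sub_norm_le y₀ y
      rw [hy₀norm] at this
      have h2 : ‖y₀ - y‖ = ‖y - y₀‖ := by rw [norm_sub_rev]
      linarith
    · have := norm_le_norm_add_norm_sub' y y₀
      rw [hy₀norm] at this
      linarith
  set c : ℝ := 2 * g x₀ / (R + 1) ^ ((N : ℝ) + 2 * α) with hcdef
  have hcpos : 0 < c := by
    apply div_pos (by linarith) (Real.rpow_pos_of_pos (by linarith) _)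
  have hkA : ∀ y ∈ A, k y ≤ -c := by
    intro y hy
    obtain ⟨hy1, hy2⟩ := hAnorm y hy
    have hyp : (0 : ℝ) < ‖y‖ := lt_of_lt_of_le (by linarith) hy1
    refine (hfar y hy1).trans ?_
    rw [hcdef, neg_div, neg_le_neg_iff]
    apply div_le_div_of_nonneg_left (by linarith) (Real.rpow_pos_of_pos hyp _)
    exact Real.rpow_le_rpow hyp.le hy2 hexp.le
  have hAmeas : MeasurableSet A := Metric.isOpen_ball.measurableSet
  have hAvolpos : 0 < volume A := Metric.measure_ball_pos _ _ (by norm_num)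
  have hAvolfin : volume A < ⊤ := measure_ball_lt_top
  -- the integral of k is strictly negative
  have hintA : ∫ y in A, k y ≤ -c * (volume A).toReal := by
    have h1 : ∫ y in A, k y ≤ ∫ _y in A, (-c : ℝ) := by
      apply setIntegral_mono_on hik.integrableOn (integrableOn_const hAvolfin.ne)
        hAmeas hkA
    simpa [mul_comm, Measure.real] using h1
  have hintAc : ∫ y in Aᶜ, k y ≤ 0 :=
    setIntegral_nonpos hAmeas.compl (fun y _ => hknonpos y)
  have hint : ∫ y, k y < 0 := by
    rw [← integral_add_compl hAmeas hik]
    have : -c * (volume A).toReal < 0 := by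
      apply mul_neg_of_neg_of_pos (by linarith)
      exact ENNReal.toReal_pos hAvolpos.ne' hAvolfin.ne
    linarith
  -- conclude
  have hintsub : ∫ y, k y = (∫ y, fracKernel N α v x₀ y) - ∫ y, fracKernel N α u x₀ y := by
    simpa [hkdef] using integral_sub hiv hiu
  have hlap : fracLap N α u x₀ < fracLap N α v x₀ := by
    simp only [fracLap]
    nlinarith [hint, hintsub]
  have hmon : h (u x₀) ≤ h (v x₀) := hmono (by have := hg0; simp [hgdef] at this; linarith)
  have hA' := (hsuper x₀ hx₀O).2
  have hB' := (hsub x₀ hx₀O).2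
  linarith
end

section
/- Let N ≥ 2, α ∈ (0,1), p > 1, let Ω ⊂ ℝ^N be an open, bounded, connected set with C² boundary, and let f : Ω → ℝ be nonnegative. Let u and v be two positive classical solutions of (−Δ)^α u + |u|^{p−1}u = f in Ω, u = 0 in Ω^c, u(x) → +∞ as x → ∂Ω. If for some k > 1 the set A_k = {x ∈ Ω : u(x) − k v(x) > 0} is nonempty, then the closure of A_k meets ∂Ω, i.e. ∂A_k ∩ ∂Ω ≠ ∅. -/
open MeasureTheory Filter Topology Set
open scoped Classical

section AuxLemmas

lemma sections_null (N : ℕ) (i : Fin N) (S : Set (EucSp N)) (hS : MeasurableSet S)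
    (h : ∀ a ∈ S, ∀ b ∈ S, (∀ j, j ≠ i → a j = b j) → a = b) : volume S = 0 := by
  classical
  set e := (MeasurableEquiv.toLp 2 (Fin N → ℝ)).symm with he
  have hme : MeasurePreserving e.symm (volume : Measure (Fin N → ℝ)) volume :=
    (EuclideanSpace.volume_preserving_symm_measurableEquiv_toLp (Fin N)).symm
  set T : Set (Fin N → ℝ) := e.symm ⁻¹' S with hT
  have hTmeas : MeasurableSet T := e.symm.measurable hS
  have hvolT : volume T = volume S := hme.measure_preimage hS.nullMeasurableSet
  set p : Fin N → Prop := fun j => j ≠ i with hp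
  set π := MeasurableEquiv.piEquivPiSubtypeProd (fun _ : Fin N => ℝ) p with hπ
  have hmπ : MeasurePreserving π.symm
      ((volume : Measure ({j // p j} → ℝ)).prod (volume : Measure ({j // ¬ p j} → ℝ)))
      (volume : Measure (Fin N → ℝ)) :=
    (volume_preserving_piEquivPiSubtypeProd (fun _ : Fin N => ℝ) p).symm
  set W : Set (({j // p j} → ℝ) × ({j // ¬ p j} → ℝ)) := π.symm ⁻¹' T with hW
  have hWmeas : MeasurableSet W := π.symm.measurable hTmeas
  have hvolW : (volume : Measure ({j // p j} → ℝ)).prod volume W = volume T :=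
    hmπ.measure_preimage hTmeas.nullMeasurableSet
  rw [← hvolT, ← hvolW]
  haveI : Nonempty {j // ¬ p j} := ⟨⟨i, by simp [hp]⟩⟩
  rw [Measure.measure_prod_null hWmeas]
  refine Filter.Eventually.of_forall (fun x => ?_)
  have hsub : (Prod.mk x ⁻¹' W).Subsingleton := by
    intro y₁ hy₁ y₂ hy₂
    set a := e.symm (π.symm (x, y₁)) with ha
    set b := e.symm (π.symm (x, y₂)) with hb
    have haS : a ∈ S := hy₁
    have hbS : b ∈ S := hy₂
    have hab : a = b := by
      refine h a haS b hbS (fun j hj => ?_)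
      have h1 : a j = x ⟨j, hj⟩ := by
        simp [ha, he, hπ, MeasurableEquiv.piEquivPiSubtypeProd,
          Equiv.piEquivPiSubtypeProd_symm_apply, MeasurableEquiv.symm_symm, MeasurableEquiv.toLp_apply,
          PiLp.toLp_apply, hp, dif_pos hj]
      rw [h1]
      simp [hb, he, hπ, MeasurableEquiv.piEquivPiSubtypeProd,
        Equiv.piEquivPiSubtypeProd_symm_apply, MeasurableEquiv.symm_symm, MeasurableEquiv.toLp_apply,
        PiLp.toLp_apply, hp, dif_pos hj]
    funext j
    have hji : ¬ p j.1 := j.2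
    have h1 : y₁ j = a j.1 := by
      simp [ha, he, hπ, MeasurableEquiv.piEquivPiSubtypeProd,
        Equiv.piEquivPiSubtypeProd_symm_apply, MeasurableEquiv.symm_symm, MeasurableEquiv.toLp_apply,
        PiLp.toLp_apply, dif_neg hji]
    have h2 : y₂ j = b j.1 := by
      simp [hb, he, hπ, MeasurableEquiv.piEquivPiSubtypeProd,
        Equiv.piEquivPiSubtypeProd_symm_apply, MeasurableEquiv.symm_symm, MeasurableEquiv.toLp_apply,
        PiLp.toLp_apply, dif_neg hji]
    rw [h1, h2, hab]
  exact hsub.measure_zero _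

lemma frontier_local_null {N : ℕ} (Ω : Set (EucSp N)) (hΩopen : IsOpen Ω)
    (hΩC2 : HasC2Boundary Ω) (x : EucSp N) (hx : x ∈ frontier Ω) :
    ∃ r > 0, volume (frontier Ω ∩ Metric.ball x r) = 0 := by
  obtain ⟨U, φ, hUopen, hxU, hφ, hiff, hgrad⟩ := hΩC2 x hx
  have hφc : ContinuousOn φ U := hφ.continuousOn
  have hzero : ∀ y ∈ frontier Ω ∩ U, φ y = 0 := by
    rintro y ⟨hyf, hyU⟩
    have hycl : y ∈ closure Ω := frontier_subset_closure hyf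
    have hyno : y ∉ Ω := by
      intro hyΩ
      exact hyf.2 (by rwa [hΩopen.interior_eq])
    have h1 : ¬ φ y < 0 := fun hlt => hyno ((hiff y hyU).2 hlt)
    by_contra h0
    have hpos : 0 < φ y := lt_of_le_of_ne (not_lt.1 h1) (Ne.symm h0)
    have hcy : ContinuousAt φ y := hφc.continuousAt (hUopen.mem_nhds hyU)
    have hev : ∀ᶠ z in 𝓝 y, 0 < φ z ∧ z ∈ U :=
      (hcy.eventually_mem (Ioi_mem_nhds hpos)).and (hUopen.eventually_mem hyU)
    obtain ⟨z, hzΩ, hz0, hzU⟩ :=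
      ((mem_closure_iff_frequently.1 hycl).and_eventually hev).exists
    exact absurd ((hiff z hzU).1 hzΩ) (by linarith)
  have hLne : fderiv ℝ φ x ≠ 0 := hgrad x hxU
  obtain ⟨i, hi⟩ : ∃ i, fderiv ℝ φ x (EuclideanSpace.single i (1 : ℝ)) ≠ 0 := by
    by_contra hcon; push_neg at hcon
    apply hLne
    apply ContinuousLinearMap.coe_injective
    apply Module.Basis.ext (EuclideanSpace.basisFun (Fin N) ℝ).toBasis
    intro j
    simp [EuclideanSpace.basisFun_apply, hcon j]
  have hfder : ContinuousOn (fderiv ℝ φ) U :=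
    hφ.continuousOn_fderiv_of_isOpen hUopen (by norm_num)
  have hg : ContinuousOn (fun y => fderiv ℝ φ y (EuclideanSpace.single i (1:ℝ))) U :=
    hfder.clm_apply continuousOn_const
  have hgc : ContinuousAt (fun y => fderiv ℝ φ y (EuclideanSpace.single i (1:ℝ))) x :=
    hg.continuousAt (hUopen.mem_nhds hxU)
  have hevx : ∀ᶠ z in 𝓝 x,
      fderiv ℝ φ z (EuclideanSpace.single i (1:ℝ)) ≠ 0 ∧ z ∈ U :=
    (hgc.eventually_ne hi).and (hUopen.eventually_mem hxU)
  obtain ⟨r, hr0, hball⟩ := Metric.eventually_nhds_iff_ball.1 hevx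
  refine ⟨r, hr0, ?_⟩
  apply sections_null N i _ ((isClosed_frontier.measurableSet).inter measurableSet_ball)
  have key : ∀ a ∈ frontier Ω ∩ Metric.ball x r, ∀ b ∈ frontier Ω ∩ Metric.ball x r,
      (∀ j, j ≠ i → a j = b j) → a i < b i → False := by
    rintro a ⟨haf, hab⟩ b ⟨hbf, hbb⟩ hagree hlt
    set E : EucSp N := EuclideanSpace.single i (1 : ℝ) with hE
    set ℓ : ℝ → EucSp N := fun t => a + (t - a i) • E with hℓ
    have hba : b - a = (b i - a i) • E := by
      ext j
      by_cases hj : j = i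
      · subst hj
        simp [hE, EuclideanSpace.single_apply]
      · simp [hE, EuclideanSpace.single_apply, hj, hagree j hj]
    have hne : b i - a i ≠ 0 := sub_ne_zero.2 (ne_of_gt hlt)
    have hmem : ∀ t ∈ Icc (a i) (b i), ℓ t ∈ Metric.ball x r := by
      intro t ht
      have hs0 : 0 ≤ (t - a i) / (b i - a i) := by
        apply div_nonneg <;> linarith [ht.1, ht.2]
      have hs1 : (t - a i) / (b i - a i) ≤ 1 := by
        rw [div_le_one (by linarith)]; linarith [ht.2]
      have heq : ℓ t = (1 - (t - a i) / (b i - a i)) • a + ((t - a i) / (b i - a i)) • b := by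
        have h1 : ℓ t = a + ((t - a i) / (b i - a i)) • (b - a) := by
          rw [hba, smul_smul, div_mul_cancel₀ _ hne]
        rw [h1, smul_sub, sub_smul, one_smul]
        abel
      rw [heq]
      exact (convex_ball x r) hab hbb (by linarith) hs0 (by ring)
    have hmemU : ∀ t ∈ Icc (a i) (b i), ℓ t ∈ U := fun t ht => (hball _ (hmem t ht)).2
    have hder : ∀ t ∈ Icc (a i) (b i),
        HasDerivAt (fun s => φ (ℓ s)) (fderiv ℝ φ (ℓ t) E) t := by
      intro t ht
      have hld : HasDerivAt ℓ E t := by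
        have h1 : HasDerivAt (fun s : ℝ => s - a i) 1 t := (hasDerivAt_id t).sub_const _
        have h2 := (h1.smul_const E).const_add a
        simpa [hℓ, one_smul] using h2
      have hdφ : DifferentiableAt ℝ φ (ℓ t) :=
        (hφ.differentiableOn (by norm_num)).differentiableAt
          (hUopen.mem_nhds (hmemU t ht))
      exact hdφ.hasFDerivAt.comp_hasDerivAt t hld
    have hℓa : ℓ (a i) = a := by simp [hℓ]
    have hℓb : ℓ (b i) = b := by
      show a + (b i - a i) • E = b
      rw [← hba]; abel
    have hcont : ContinuousOn (fun s => φ (ℓ s)) (Icc (a i) (b i)) :=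
      fun t ht => ((hder t ht).continuousAt).continuousWithinAt
    have hI : φ (ℓ (a i)) = φ (ℓ (b i)) := by
      rw [hℓa, hℓb, hzero a ⟨haf, (hball _ hab).2⟩, hzero b ⟨hbf, (hball _ hbb).2⟩]
    obtain ⟨c, hc, hc0⟩ := exists_hasDerivAt_eq_zero hlt hcont hI
      (fun t ht => hder t (Ioo_subset_Icc_self ht))
    exact (hball _ (hmem c (Ioo_subset_Icc_self hc))).1 hc0
  rintro a ha b hb hagree
  rcases lt_trichotomy (a i) (b i) with h | h | h
  · exact absurd (key a ha b hb hagree h) not_false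
  · ext j
    by_cases hj : j = i
    · subst hj; exact h
    · exact hagree j hj
  · exact absurd (key b hb a ha (fun j hj => (hagree j hj).symm) h) not_false

lemma frontier_null {N : ℕ} (Ω : Set (EucSp N)) (hΩopen : IsOpen Ω)
    (hΩbdd : Bornology.IsBounded Ω) (hΩC2 : HasC2Boundary Ω) :
    volume (frontier Ω) = 0 := by
  have hcomp : IsCompact (frontier Ω) :=
    Metric.isCompact_of_isClosed_isBounded isClosed_frontier
      (hΩbdd.closure.subset frontier_subset_closure)
  choose r hr0 hnull using fun x : frontier Ω =>
    frontier_local_null Ω hΩopen hΩC2 x x.2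
  obtain ⟨t, ht⟩ := hcomp.elim_finite_subcover
    (fun x : frontier Ω => Metric.ball (x : EucSp N) (r x))
    (fun x => Metric.isOpen_ball)
    (fun y hy => mem_iUnion.2 ⟨⟨y, hy⟩, Metric.mem_ball_self (hr0 _)⟩)
  have hsub : frontier Ω ⊆ ⋃ x ∈ t, (frontier Ω ∩ Metric.ball (x : EucSp N) (r x)) := by
    intro y hy
    obtain ⟨x, hxt, hxb⟩ := mem_iUnion₂.1 (ht hy)
    exact mem_iUnion₂.2 ⟨x, hxt, hy, hxb⟩
  refine measure_mono_null hsub ?_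
  exact (measure_biUnion_null_iff t.countable_toSet).2 fun x _ => hnull x

end AuxLemmas


/-- Lemma 5.1: if `A_k = {u > k v}` is nonempty then its boundary meets `∂Ω`. -/
theorem Ak_boundary_touches
    (N : ℕ) (hN : 2 ≤ N) (α p : ℝ) (hα : α ∈ Ioo (0 : ℝ) 1) (hp : 1 < p)
    (Ω : Set (EucSp N)) (hΩopen : IsOpen Ω) (hΩbdd : Bornology.IsBounded Ω)
    (hΩconn : IsConnected Ω) (hΩC2 : HasC2Boundary Ω)
    (f : EucSp N → ℝ) (hf : ∀ x ∈ Ω, 0 ≤ f x)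
    (u v : EucSp N → ℝ)
    (hu : IsLargeSolution N α p Ω f u) (hv : IsLargeSolution N α p Ω f v)
    (hupos : ∀ x ∈ Ω, 0 < u x) (hvpos : ∀ x ∈ Ω, 0 < v x)
    (k : ℝ) (hk : 1 < k)
    (hA : ({x | x ∈ Ω ∧ 0 < u x - k * v x} : Set (EucSp N)).Nonempty) :
    (frontier {x | x ∈ Ω ∧ 0 < u x - k * v x} ∩ frontier Ω).Nonempty := by
  classical
  set w : EucSp N → ℝ := fun x => u x - k * v x with hwdef
  set A : Set (EucSp N) := {x | x ∈ Ω ∧ 0 < u x - k * v x} with hAdef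
  by_contra hcon
  rw [Set.not_nonempty_iff_eq_empty] at hcon
  have hwcont : ContinuousOn w Ω := hu.2.1.sub (continuousOn_const.mul hv.2.1)
  have hAopen : IsOpen A := by
    have hA' : A = Ω ∩ w ⁻¹' (Ioi 0) := by
      ext z; simp [hAdef, hwdef, and_comm]
    rw [hA']
    exact hwcont.isOpen_inter_preimage hΩopen isOpen_Ioi
  have hAsub : A ⊆ Ω := fun x hx => hx.1
  have hfrA : frontier A ⊆ Ω := by
    intro y hy
    by_cases hyΩ : y ∈ Ω
    · exact hyΩ
    exfalso
    have h1 : y ∈ closure Ω := closure_mono hAsub (frontier_subset_closure hy)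
    have h2 : y ∈ frontier Ω := ⟨h1, by rwa [hΩopen.interior_eq]⟩
    exact (Set.eq_empty_iff_forall_notMem.1 hcon y) ⟨hy, h2⟩
  have hclA : closure A ⊆ Ω := by
    intro y hy
    by_cases hyA : y ∈ A
    · exact hAsub hyA
    · exact hfrA (by rw [hAopen.frontier_eq]; exact ⟨hy, hyA⟩)
  have hcomp : IsCompact (closure A) :=
    Metric.isCompact_of_isClosed_isBounded isClosed_closure ((hΩbdd.subset hAsub).closure)
  obtain ⟨x₀, hx₀cl, hx₀max⟩ :=
    hcomp.exists_isMaxOn hA.closure (hwcont.mono hclA)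
  have hx₀Ω : x₀ ∈ Ω := hclA hx₀cl
  have hx₀pos : 0 < w x₀ := by
    obtain ⟨z, hz⟩ := hA
    exact lt_of_lt_of_le hz.2 (hx₀max (subset_closure hz))
  -- a.e. global maximality
  have hmax : ∀ x, x ∉ frontier Ω → w x ≤ w x₀ := by
    intro x hxF
    by_cases hxA : x ∈ A
    · exact hx₀max (subset_closure hxA)
    by_cases hxΩ : x ∈ Ω
    · have h1 : ¬ 0 < u x - k * v x := fun h => hxA ⟨hxΩ, h⟩
      have : w x ≤ 0 := not_lt.1 h1
      linarith
    · have hxcl : x ∉ closure Ω := by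
        intro h
        exact hxF ⟨h, by rwa [hΩopen.interior_eq]⟩
      have hu0 : u x = 0 := hu.2.2.1 x hxcl
      have hv0 : v x = 0 := hv.2.2.1 x hxcl
      have : w x = 0 := by simp [hwdef, hu0, hv0]
      linarith
  -- the frontier of Ω is Lebesgue-null
  have hFnull : volume (frontier Ω) = 0 := frontier_null Ω hΩopen hΩbdd hΩC2
  -- the set of bad translates is null
  have hbad1 : volume {y : EucSp N | x₀ + y ∈ frontier Ω} = 0 := by
    have h1 : {y : EucSp N | x₀ + y ∈ frontier Ω} = (fun y => x₀ + y) ⁻¹' frontier Ω := rfl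
    rw [h1, measure_preimage_add]; exact hFnull
  have hbad2 : volume {y : EucSp N | x₀ - y ∈ frontier Ω} = 0 := by
    have h1 : {y : EucSp N | x₀ - y ∈ frontier Ω}
        = Neg.neg ⁻¹' ((fun y => x₀ + y) ⁻¹' frontier Ω) := by
      ext y; simp [sub_eq_add_neg]
    have h2 : volume ((fun y => x₀ + y) ⁻¹' frontier Ω) = 0 := by
      rw [measure_preimage_add]; exact hFnull
    rw [h1]
    exact ((Measure.measurePreserving_neg (volume : Measure (EucSp N))).measure_preimage
      (NullMeasurableSet.of_null h2)).trans h2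
  have hbad : volume ({y : EucSp N | x₀ + y ∈ frontier Ω}
      ∪ {y : EucSp N | x₀ - y ∈ frontier Ω}) = 0 :=
    measure_union_null hbad1 hbad2
  -- the kernel of w at x₀ is a.e. nonpositive
  have hae : ∀ᵐ y, fracKernel N α w x₀ y ≤ 0 := by
    have hnm : ∀ᵐ y, y ∉ ({y : EucSp N | x₀ + y ∈ frontier Ω}
        ∪ {y : EucSp N | x₀ - y ∈ frontier Ω}) :=
      measure_eq_zero_iff_ae_notMem.1 hbad
    filter_upwards [hnm] with y hy
    have h1 : x₀ + y ∉ frontier Ω := fun h => hy (Or.inl h)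
    have h2 : x₀ - y ∉ frontier Ω := fun h => hy (Or.inr h)
    have hnum : w (x₀ + y) + w (x₀ - y) - 2 * w x₀ ≤ 0 := by
      have := hmax _ h1; have := hmax _ h2; linarith
    have hden : (0:ℝ) ≤ ‖y‖ ^ ((N : ℝ) + 2 * α) :=
      Real.rpow_nonneg (norm_nonneg y) _
    exact div_nonpos_iff.2 (Or.inr ⟨hnum, hden⟩)
  -- kernel decomposition and integrability
  have hker : fracKernel N α w x₀ =
      fun y => fracKernel N α u x₀ y - k * fracKernel N α v x₀ y := by
    funext y
    simp only [fracKernel, hwdef]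
    rw [← mul_div_assoc, ← sub_div]
    ring_nf
  have hintu : Integrable (fracKernel N α u x₀) := (hu.2.2.2.1 x₀ hx₀Ω).1
  have hintv : Integrable (fracKernel N α v x₀) := (hv.2.2.2.1 x₀ hx₀Ω).1
  have hI : ∫ y, fracKernel N α w x₀ y ≤ 0 := integral_nonpos_of_ae hae
  have hlap : fracLap N α w x₀ = fracLap N α u x₀ - k * fracLap N α v x₀ := by
    simp only [fracLap]
    rw [hker, integral_sub hintu (hintv.const_mul k), integral_const_mul]
    ring
  have hlap0 : 0 ≤ fracLap N α w x₀ := by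
    rw [fracLap]; nlinarith
  -- the equations at x₀
  have hueq : fracLap N α u x₀ + |u x₀| ^ (p - 1) * u x₀ = f x₀ := (hu.2.2.2.1 x₀ hx₀Ω).2
  have hveq : fracLap N α v x₀ + |v x₀| ^ (p - 1) * v x₀ = f x₀ := (hv.2.2.2.1 x₀ hx₀Ω).2
  have hup : 0 < u x₀ := hupos x₀ hx₀Ω
  have hvp : 0 < v x₀ := hvpos x₀ hx₀Ω
  have hkv : k * v x₀ < u x₀ := by
    have := hx₀pos
    simp only [hwdef] at this
    linarith
  -- the key algebraic strict inequality
  have key : k * (|v x₀| ^ (p - 1) * v x₀) < |u x₀| ^ (p - 1) * u x₀ := by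
    rw [abs_of_pos hup, abs_of_pos hvp]
    have hp1 : 0 ≤ p - 1 := by linarith
    have hk0 : (0:ℝ) < k := by linarith
    have hka : (0:ℝ) ≤ k * v x₀ := by positivity
    have h1 : (k * v x₀) ^ (p - 1) ≤ u x₀ ^ (p - 1) :=
      Real.rpow_le_rpow hka (le_of_lt hkv) hp1
    have h2 : (k * v x₀) ^ (p - 1) = k ^ (p - 1) * v x₀ ^ (p - 1) :=
      Real.mul_rpow (le_of_lt hk0) (le_of_lt hvp)
    have h3 : (1:ℝ) ≤ k ^ (p - 1) :=
      Real.one_le_rpow (le_of_lt hk) hp1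
    have h4 : (0:ℝ) < v x₀ ^ (p - 1) := Real.rpow_pos_of_pos hvp _
    have h5 : (0:ℝ) < u x₀ ^ (p - 1) := Real.rpow_pos_of_pos hup _
    have c2 : k ^ (p - 1) * v x₀ ^ (p - 1) ≤ u x₀ ^ (p - 1) := h2 ▸ h1
    calc k * (v x₀ ^ (p - 1) * v x₀)
        = (1 : ℝ) * (v x₀ ^ (p - 1) * (k * v x₀)) := by ring
      _ ≤ k ^ (p - 1) * (v x₀ ^ (p - 1) * (k * v x₀)) :=
          mul_le_mul_of_nonneg_right h3 (le_of_lt (mul_pos h4 (mul_pos hk0 hvp)))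
      _ = (k ^ (p - 1) * v x₀ ^ (p - 1)) * (k * v x₀) := by ring
      _ ≤ u x₀ ^ (p - 1) * (k * v x₀) :=
          mul_le_mul_of_nonneg_right c2 (le_of_lt (mul_pos hk0 hvp))
      _ < u x₀ ^ (p - 1) * u x₀ := (mul_lt_mul_iff_right₀ h5).2 hkv
  have hf0 : 0 ≤ f x₀ := hf x₀ hx₀Ω
  have hv2 : k * fracLap N α v x₀ = k * f x₀ - k * (|v x₀| ^ (p - 1) * v x₀) := by
    have h6 : fracLap N α v x₀ = f x₀ - |v x₀| ^ (p - 1) * v x₀ := by linarith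
    rw [h6]; ring
  have hff : f x₀ ≤ k * f x₀ := le_mul_of_one_le_left hf0 (le_of_lt hk)
  linarith [hlap0, hlap, hueq, hv2, key, hff]
end
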